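/- Let (ρ_{n,N})_{n≥1, N≥0} be real numbers with ρ_{1,0} = 1 and ρ_{n,0} = 0 for n ≥ 2, satisfying the recurrence ρ_{n,N+1} = (1/4)ρ_{n,N} + (1/2) Σ_{n₁+n₂=n, n₁,n₂≥1} ρ_{n₁,N} ρ_{n₂,N} + (1/4) Σ_{n₁+n₂+n₃=n, n₁,n₂,n₃≥1} ρ_{n₁,N} ρ_{n₂,N} ρ_{n₃,N}. Then for every N ≥ 0 and every complex z with |z| ≤ 1, the series Σ_{n≥1} ρ_{n,N} z^n converges absolutely and equals P^{∘N}(z) (equivalently, the identity Σ_{n≥1} ρ_{n,N} z^n = P^{∘N}(z) holds as formal power series). -/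

import Mathlib

open Filter

/-- The cubic polynomial `P(z) = (z + 2z² + z³)/4`. -/
noncomputable def P : ℂ → ℂ := fun z => (z + 2 * z ^ 2 + z ^ 3) / 4


-- key collapse lemma
lemma collapseL {ι : Type*} (s : Finset ι) (d : ι → ℕ) (F : ι → ℂ) (K : ℕ)
    (h : ∀ x ∈ s, F x ≠ 0 → d x ∈ Finset.Icc 1 K) (z : ℂ) :
    ∑ x ∈ s, F x * z ^ (d x)
      = ∑ n ∈ Finset.Icc 1 K, (∑ x ∈ s, if d x = n then F x else 0) * z ^ n := by
  have : ∀ n ∈ Finset.Icc 1 K, (∑ x ∈ s, if d x = n then F x else 0) * z ^ n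
      = ∑ x ∈ s, if d x = n then F x * z ^ (d x) else 0 := by
    intro n hn
    rw [Finset.sum_mul]
    refine Finset.sum_congr rfl fun x hx => ?_
    split
    · next h' => rw [h']
    · simp
  rw [Finset.sum_congr rfl this, Finset.sum_comm]
  refine Finset.sum_congr rfl fun x hx => ?_
  rw [Finset.sum_ite_eq (Finset.Icc 1 K) (d x)]
  split
  · rfl
  · next hne =>
    by_cases hF : F x = 0
    · simp [hF]
    · exact absurd (h x hx hF) hne

lemma ext2 (f : ℕ → ℕ → ℂ) (n K : ℕ) (hn : n ≤ K)
    (hf : ∀ n₁ n₂, n < n₁ ∨ n < n₂ → f n₁ n₂ = 0) :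
    ∑ n₁ ∈ Finset.Icc 1 n, ∑ n₂ ∈ Finset.Icc 1 n, f n₁ n₂
      = ∑ n₁ ∈ Finset.Icc 1 K, ∑ n₂ ∈ Finset.Icc 1 K, f n₁ n₂ := by
  have hsub : Finset.Icc 1 n ⊆ Finset.Icc 1 K := Finset.Icc_subset_Icc_right hn
  rw [Finset.sum_subset hsub]
  · refine Finset.sum_congr rfl fun n₁ _ => ?_
    rw [Finset.sum_subset hsub]
    intro n₂ h2 h2'
    refine hf _ _ (Or.inr ?_)
    simp only [Finset.mem_Icc] at h2 h2'
    omega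
  · intro n₁ h1 h1'
    refine Finset.sum_eq_zero fun n₂ _ => hf _ _ (Or.inl ?_)
    simp only [Finset.mem_Icc] at h1 h1'
    omega

lemma mul_expand (a b : ℕ → ℂ) (K p q : ℕ) (ha : ∀ n, p < n → a n = 0)
    (hb : ∀ n, q < n → b n = 0) (hK : p + q ≤ K) (hp : 1 ≤ p) (hq : 1 ≤ q) (z : ℂ) :
    (∑ n ∈ Finset.Icc 1 K, a n * z ^ n) * (∑ n ∈ Finset.Icc 1 K, b n * z ^ n)
      = ∑ n ∈ Finset.Icc 1 K, (∑ n₁ ∈ Finset.Icc 1 n, ∑ n₂ ∈ Finset.Icc 1 n,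
          if n₁ + n₂ = n then a n₁ * b n₂ else 0) * z ^ n := by
  rw [Finset.sum_mul_sum]
  have lhs : ∑ n₁ ∈ Finset.Icc 1 K, ∑ n₂ ∈ Finset.Icc 1 K,
      (a n₁ * z ^ n₁) * (b n₂ * z ^ n₂)
      = ∑ x ∈ (Finset.Icc 1 K) ×ˢ (Finset.Icc 1 K),
          (a x.1 * b x.2) * z ^ (x.1 + x.2) := by
    rw [Finset.sum_product]
    refine Finset.sum_congr rfl fun n₁ _ => Finset.sum_congr rfl fun n₂ _ => ?_
    rw [pow_add]; ring
  rw [lhs, collapseL ((Finset.Icc 1 K) ×ˢ (Finset.Icc 1 K)) (fun x => x.1 + x.2)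
      (fun x => a x.1 * b x.2) K ?hmem z]
  case hmem =>
    intro x hx hF
    simp only [Finset.mem_product, Finset.mem_Icc] at hx
    simp only [Finset.mem_Icc]
    constructor
    · omega
    · by_contra hc
      push_neg at hc
      have : p < x.1 ∨ q < x.2 := by omega
      rcases this with h | h
      · exact hF (by rw [ha _ h, zero_mul])
      · exact hF (by rw [hb _ h, mul_zero])
  refine Finset.sum_congr rfl fun n hn => ?_
  congr 1
  rw [Finset.sum_product]
  simp only [Finset.mem_Icc] at hn
  refine (ext2 (fun n₁ n₂ => if n₁ + n₂ = n then a n₁ * b n₂ else 0) n K hn.2 ?_).symm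
  intro n₁ n₂ h
  rw [if_neg (by omega)]

lemma ext3 (f : ℕ → ℕ → ℕ → ℂ) (n K : ℕ) (hn : n ≤ K)
    (hf : ∀ n₁ n₂ n₃, n < n₁ ∨ n < n₂ ∨ n < n₃ → f n₁ n₂ n₃ = 0) :
    ∑ n₁ ∈ Finset.Icc 1 n, ∑ n₂ ∈ Finset.Icc 1 n, ∑ n₃ ∈ Finset.Icc 1 n, f n₁ n₂ n₃
      = ∑ n₁ ∈ Finset.Icc 1 K, ∑ n₂ ∈ Finset.Icc 1 K, ∑ n₃ ∈ Finset.Icc 1 K, f n₁ n₂ n₃ := by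
  have hsub : Finset.Icc 1 n ⊆ Finset.Icc 1 K := Finset.Icc_subset_Icc_right hn
  rw [Finset.sum_subset hsub]
  · refine Finset.sum_congr rfl fun n₁ _ => ?_
    exact ext2 (f n₁) n K hn (fun n₂ n₃ h => hf _ _ _ (Or.inr h))
  · intro n₁ h1 h1'
    refine Finset.sum_eq_zero fun n₂ _ => Finset.sum_eq_zero fun n₃ _ => ?_
    refine hf _ _ _ (Or.inl ?_)
    simp only [Finset.mem_Icc] at h1 h1'
    omega

lemma cube_expand (c : ℕ → ℂ) (K p : ℕ) (hc : ∀ n, p < n → c n = 0)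
    (hK : 3 * p ≤ K) (z : ℂ) :
    (∑ n ∈ Finset.Icc 1 K, c n * z ^ n) ^ 3
      = ∑ n ∈ Finset.Icc 1 K, (∑ n₁ ∈ Finset.Icc 1 n, ∑ n₂ ∈ Finset.Icc 1 n,
          ∑ n₃ ∈ Finset.Icc 1 n,
          if n₁ + n₂ + n₃ = n then c n₁ * c n₂ * c n₃ else 0) * z ^ n := by
  set I := Finset.Icc 1 K with hI
  have lhs : (∑ n ∈ I, c n * z ^ n) ^ 3
      = ∑ x ∈ I ×ˢ (I ×ˢ I), (c x.1 * c x.2.1 * c x.2.2) * z ^ (x.1 + x.2.1 + x.2.2) := by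
    rw [Finset.sum_product]
    simp only [Finset.sum_product]
    rw [show (∑ n ∈ I, c n * z ^ n) ^ 3
        = (∑ n ∈ I, c n * z ^ n) * ((∑ n ∈ I, c n * z ^ n) * (∑ n ∈ I, c n * z ^ n)) by ring,
      Finset.sum_mul_sum, Finset.mul_sum]
    refine Finset.sum_congr rfl fun n₁ _ => ?_
    rw [Finset.mul_sum]
    refine Finset.sum_congr rfl fun n₂ _ => ?_
    rw [Finset.sum_mul]
    refine Finset.sum_congr rfl fun n₃ _ => ?_
    rw [pow_add, pow_add]; ring
  rw [lhs, collapseL (I ×ˢ (I ×ˢ I)) (fun x => x.1 + x.2.1 + x.2.2)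
      (fun x => c x.1 * c x.2.1 * c x.2.2) K ?hmem z]
  case hmem =>
    intro x hx hF
    simp only [hI, Finset.mem_product, Finset.mem_Icc] at hx
    simp only [Finset.mem_Icc]
    constructor
    · omega
    · by_contra hcon
      push_neg at hcon
      have : p < x.1 ∨ p < x.2.1 ∨ p < x.2.2 := by omega
      rcases this with h | h | h
      · exact hF (by rw [hc _ h]; ring)
      · exact hF (by rw [hc _ h]; ring)
      · exact hF (by rw [hc _ h]; ring)
  refine Finset.sum_congr rfl fun n hn => ?_
  congr 1
  rw [Finset.sum_product]
  simp only [Finset.sum_product]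
  simp only [hI, Finset.mem_Icc] at hn
  refine (ext3 (fun n₁ n₂ n₃ => if n₁ + n₂ + n₃ = n then c n₁ * c n₂ * c n₃ else 0) n K hn.2 ?_).symm
  intro n₁ n₂ n₃ h
  rw [if_neg (by omega)]


section Main

variable (ρ : ℕ → ℕ → ℝ) (h10 : ρ 1 0 = 1) (h0 : ∀ n : ℕ, 2 ≤ n → ρ n 0 = 0)
    (hrec : ∀ n : ℕ, 1 ≤ n → ∀ N : ℕ,
      ρ n (N + 1) =
        (1/4) * ρ n N
        + (1/2) * ∑ n₁ ∈ Finset.Icc (1:ℕ) n, ∑ n₂ ∈ Finset.Icc (1:ℕ) n,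
            (if n₁ + n₂ = n then ρ n₁ N * ρ n₂ N else 0)
        + (1/4) * ∑ n₁ ∈ Finset.Icc (1:ℕ) n, ∑ n₂ ∈ Finset.Icc (1:ℕ) n,
            ∑ n₃ ∈ Finset.Icc (1:ℕ) n,
              (if n₁ + n₂ + n₃ = n then ρ n₁ N * ρ n₂ N * ρ n₃ N else 0))

include h0 hrec in
lemma supp : ∀ N n, 3 ^ N < n → ρ n N = 0 := by
  intro N
  induction N with
  | zero => intro n hn; exact h0 n (by simp at hn; omega)
  | succ N ih =>
    intro n hn
    have h3 : (3:ℕ) ^ N < n := lt_of_le_of_lt (Nat.pow_le_pow_right (by norm_num) (Nat.le_succ N)) hn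
    have h1n : 1 ≤ n := by have := Nat.one_le_pow (N+1) 3 (by norm_num); omega
    rw [hrec n h1n N, ih n h3]
    have e2 : ∑ n₁ ∈ Finset.Icc (1:ℕ) n, ∑ n₂ ∈ Finset.Icc (1:ℕ) n,
        (if n₁ + n₂ = n then ρ n₁ N * ρ n₂ N else 0) = 0 := by
      refine Finset.sum_eq_zero fun n₁ h1 => Finset.sum_eq_zero fun n₂ h2 => ?_
      split
      · next he =>
        simp only [Finset.mem_Icc] at h1 h2
        have hpow : 3 ^ (N+1) = 3 * 3 ^ N := by ring
        have : 3 ^ N < n₁ ∨ 3 ^ N < n₂ := by omega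
        rcases this with h | h
        · rw [ih _ h, zero_mul]
        · rw [ih _ h, mul_zero]
      · rfl
    have e3 : ∑ n₁ ∈ Finset.Icc (1:ℕ) n, ∑ n₂ ∈ Finset.Icc (1:ℕ) n,
        ∑ n₃ ∈ Finset.Icc (1:ℕ) n,
          (if n₁ + n₂ + n₃ = n then ρ n₁ N * ρ n₂ N * ρ n₃ N else 0) = 0 := by
      refine Finset.sum_eq_zero fun n₁ h1 => Finset.sum_eq_zero fun n₂ h2 =>
        Finset.sum_eq_zero fun n₃ h3' => ?_
      split
      · next he =>
        simp only [Finset.mem_Icc] at h1 h2 h3'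
        have hpow : 3 ^ (N+1) = 3 * 3 ^ N := by ring
        have : 3 ^ N < n₁ ∨ 3 ^ N < n₂ ∨ 3 ^ N < n₃ := by omega
        rcases this with h | h | h
        · rw [ih _ h]; ring
        · rw [ih _ h]; ring
        · rw [ih _ h]; ring
      · rfl
    rw [e2, e3]; ring

include h10 h0 hrec in
lemma key : ∀ (N : ℕ) (z : ℂ),
    ∑ n ∈ Finset.Icc 1 (3 ^ N), (ρ n N : ℂ) * z ^ n = P^[N] z := by
  intro N
  induction N with
  | zero => intro z; simp [h10]
  | succ N ih =>
    intro z
    set m := 3 ^ N with hm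
    set K := 3 ^ (N+1) with hKdef
    have hpow : K = 3 * m := by rw [hKdef, hm]; ring
    have hm1 : 1 ≤ m := Nat.one_le_pow _ _ (by norm_num)
    have hmK : m ≤ K := by omega
    set c : ℕ → ℂ := fun n => ((ρ n N : ℝ) : ℂ) with hc
    have hcz : ∀ n, m < n → c n = 0 := by
      intro n h
      simp only [hc, supp ρ h0 hrec N n h, Complex.ofReal_zero]
    have hw : P^[N] z = ∑ n ∈ Finset.Icc 1 K, c n * z ^ n := by
      rw [← ih z]
      refine Finset.sum_subset (Finset.Icc_subset_Icc_right hmK) ?_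
      intro n h1 h2
      simp only [Finset.mem_Icc] at h1 h2
      rw [supp ρ h0 hrec N n (by simp only [hm] at h1 h2 ⊢; omega)]
      simp
    have hcoef : ∀ n ∈ Finset.Icc 1 K, ((ρ n (N+1) : ℝ) : ℂ) * z ^ n
        = (1/4 : ℂ) * (c n * z ^ n)
          + (1/2 : ℂ) * ((∑ n₁ ∈ Finset.Icc (1:ℕ) n, ∑ n₂ ∈ Finset.Icc (1:ℕ) n,
              if n₁ + n₂ = n then c n₁ * c n₂ else 0) * z ^ n)
          + (1/4 : ℂ) * ((∑ n₁ ∈ Finset.Icc (1:ℕ) n, ∑ n₂ ∈ Finset.Icc (1:ℕ) n,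
              ∑ n₃ ∈ Finset.Icc (1:ℕ) n,
              if n₁ + n₂ + n₃ = n then c n₁ * c n₂ * c n₃ else 0) * z ^ n) := by
      intro n hn
      simp only [Finset.mem_Icc] at hn
      rw [hrec n hn.1 N]
      push_cast [apply_ite (fun x : ℝ => (x : ℂ))]
      simp only [hc]
      ring
    rw [Finset.sum_congr rfl hcoef, Finset.sum_add_distrib, Finset.sum_add_distrib,
      ← Finset.mul_sum, ← Finset.mul_sum, ← Finset.mul_sum,
      ← mul_expand c c K m m hcz hcz (by omega) hm1 hm1 z,
      ← cube_expand c K m hcz (by omega) z,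
      Function.iterate_succ_apply', ← hw]
    set w := P^[N] z
    show 1/4 * w + 1/2 * (w * w) + 1/4 * w ^ 3 = P w
    simp only [P]
    ring

end Main


/-- if `ρ_{n,N}` satisfies `ρ_{1,0} = 1`, `ρ_{n,0} = 0` for `n ≥ 2`, and the
three-term merging recurrence, then for every `N` and every `|z| ≤ 1` the series
`Σ_{n≥1} ρ_{n,N} z^n` converges absolutely and equals the `N`-fold iterate `P^{∘N}(z)`. -/
theorem stmt1 (ρ : ℕ → ℕ → ℝ) (h10 : ρ 1 0 = 1) (h0 : ∀ n : ℕ, 2 ≤ n → ρ n 0 = 0)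
    (hrec : ∀ n : ℕ, 1 ≤ n → ∀ N : ℕ,
      ρ n (N + 1) =
        (1/4) * ρ n N
        + (1/2) * ∑ n₁ ∈ Finset.Icc (1:ℕ) n, ∑ n₂ ∈ Finset.Icc (1:ℕ) n,
            (if n₁ + n₂ = n then ρ n₁ N * ρ n₂ N else 0)
        + (1/4) * ∑ n₁ ∈ Finset.Icc (1:ℕ) n, ∑ n₂ ∈ Finset.Icc (1:ℕ) n,
            ∑ n₃ ∈ Finset.Icc (1:ℕ) n,
              (if n₁ + n₂ + n₃ = n then ρ n₁ N * ρ n₂ N * ρ n₃ N else 0)) :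
    ∀ (N : ℕ) (z : ℂ), ‖z‖ ≤ 1 →
      Summable (fun n : ℕ => ‖(ρ (n + 1) N : ℂ) * z ^ (n + 1)‖) ∧
      ∑' n : ℕ, (ρ (n + 1) N : ℂ) * z ^ (n + 1) = P^[N] z := by
  intro N z _
  have hz : ∀ n : ℕ, n ∉ Finset.range (3 ^ N) →
      ((ρ (n + 1) N : ℝ) : ℂ) * z ^ (n + 1) = 0 := by
    intro n hn
    simp only [Finset.mem_range, not_lt] at hn
    rw [supp ρ h0 hrec N (n + 1) (by omega)]
    simp
  constructor
  · refine summable_of_ne_finset_zero (s := Finset.range (3 ^ N)) ?_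
    intro n hn
    rw [hz n hn, norm_zero]
  · rw [tsum_eq_sum hz, ← key ρ h10 h0 hrec N z,
      show Finset.Icc 1 (3 ^ N) = Finset.Ico 1 (3 ^ N + 1) by
        rw [Finset.Ico_add_one_right_eq_Icc],
      Finset.sum_Ico_eq_sum_range]
    simp only [Nat.add_sub_cancel]
    exact Finset.sum_congr rfl fun i _ => by rw [Nat.add_comm 1 i]
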